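/- Let p be a prime and k ≥ 1 an integer. Let F ⊂ ℂ_p be a subfield with [F:ℚ] = 2 admitting a field embedding ι : F → ℝ (a real quadratic field), with nontrivial ℚ-automorphism x ↦ x′, and let τ ∈ F ∖ ℚ with τ ∉ ℚ_p. Let Σ be the set of all ω = γ·τ (Möbius action of γ ∈ SL₂(ℤ[1/p]) on ℂ_p) such that ι(ω)·ι(ω′) < 0. For ω ∈ Σ let Q_ω = [a_ω, b_ω, c_ω] be the unique integral binary quadratic form with gcd(a_ω,b_ω,c_ω) = 1, Q_ω(ω,1) = 0, and ι(ω) = (−b_ω + √D_ω)/(2a_ω), where D_ω = b_ω² − 4a_ω c_ω > 0 and √D_ω is the positive real square root; let sgn(ω) ∈ {±1} be the sign of ι(ω), and fix any c_ω ∈ ℂ_p with c_ω² = D_ω. Then for every integer h ≥ 0 and every ε > 0, for all but finitely many ω ∈ Σ one has: Q_ω(z,1) ≠ 0 for all z ∈ H_p^{≤h}, and sup_{z ∈ H_p^{≤h}} |c_ω^k · Q_ω(z,1)^{−k}| < ε. In particular the series Σ_{ω∈Σ} sgn(ω)·c_ω^k·Q_ω(z,1)^{−k} converges uniformly on H_p^{≤h}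 after removing the finitely many terms with a zero of Q_ω(z,1) in H_p^{≤h}. -/

import Mathlib

open Filter

/-- The affinoid subdomain `H_p^{≤n}` of the `p`-adic upper half-plane:
the set of `z ∈ ℂ_p` with `‖z‖ ≤ p^n` and `‖z − t‖ ≥ p^(−n)` for every `t ∈ ℚ_p`. -/
def affinoid (p : ℕ) [Fact p.Prime] (K : Type*) [NormedField K] [Algebra ℚ_[p] K]
    (n : ℕ) : Set K :=
  {z | ‖z‖ ≤ (p : ℝ) ^ n ∧ ∀ t : ℚ_[p], ((p : ℝ) ^ n)⁻¹ ≤ ‖z - algebraMap ℚ_[p] K t‖}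

/-- `x ∈ ℤ[1/p]`: `x = u/p^n` for some `u ∈ ℤ`, `n ∈ ℕ`. -/
def IsPInt (p : ℕ) (x : ℚ) : Prop := ∃ (u : ℤ) (n : ℕ), x = (u : ℚ) / (p : ℚ) ^ n

set_option linter.unusedSectionVars false
set_option maxHeartbeats 1000000

section Aux

variable {p : ℕ} [Fact p.Prime] {K : Type*} [NormedField K] [CharZero K] [Algebra ℚ_[p] K]

-- norm facts
theorem normK_rat (hK : ∀ x : ℚ_[p], ‖algebraMap ℚ_[p] K x‖ = ‖x‖) (q : ℚ) :
    ‖(q : K)‖ = ‖(q : ℚ_[p])‖ := by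
  rw [← map_ratCast (algebraMap ℚ_[p] K) q, hK]

theorem normK_int (hK : ∀ x : ℚ_[p], ‖algebraMap ℚ_[p] K x‖ = ‖x‖) (n : ℤ) :
    ‖(n : K)‖ = ‖(n : ℚ_[p])‖ := by
  rw [← map_intCast (algebraMap ℚ_[p] K) n, hK]

theorem ultraK (hK : ∀ x : ℚ_[p], ‖algebraMap ℚ_[p] K x‖ = ‖x‖) :
    IsUltrametricDist K := by
  apply IsUltrametricDist.isUltrametricDist_of_forall_norm_natCast_le_one
  intro n
  rw [← map_natCast (algebraMap ℚ_[p] K) n, hK]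
  exact Padic.norm_int_le_one (n : ℤ) |>.trans_eq' (by push_cast; rfl)

theorem norm_sum_lt_of_lt (hK : ∀ x : ℚ_[p], ‖algebraMap ℚ_[p] K x‖ = ‖x‖)
    {ι : Type*} (s : Finset ι) (f : ι → K) {ε : ℝ} (hε : 0 < ε)
    (h : ∀ i ∈ s, ‖f i‖ < ε) : ‖∑ i ∈ s, f i‖ < ε := by
  haveI := ultraK hK
  classical
  induction s using Finset.induction_on with
  | empty => simpa using hε
  | @insert a s ha ih =>
    rw [Finset.sum_insert ha]
    refine lt_of_le_of_lt (IsUltrametricDist.norm_add_le_max _ _) ?_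
    exact max_lt (h a (Finset.mem_insert_self a s))
      (ih fun i hi => h i (Finset.mem_insert_of_mem hi))


/-- distance from affinoid point to a point outside the affinoid -/
theorem dist_lower (hK : ∀ x : ℚ_[p], ‖algebraMap ℚ_[p] K x‖ = ‖x‖)
    {h : ℕ} {z ξ : K} (hz : z ∈ affinoid p K h) (hξ : ξ ∉ affinoid p K h) :
    ((p:ℝ)^h)⁻¹ * ((p:ℝ)^h)⁻¹ * max 1 ‖ξ‖ ≤ ‖z - ξ‖ := by
  haveI := ultraK hK
  have hp1 : (1:ℝ) ≤ (p:ℝ)^h := one_le_pow₀ (by exact_mod_cast (Fact.out : p.Prime).one_lt.le)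
  have hp0 : (0:ℝ) < (p:ℝ)^h := lt_of_lt_of_le zero_lt_one hp1
  have hinv1 : ((p:ℝ)^h)⁻¹ ≤ 1 := inv_le_one_of_one_le₀ hp1
  have hinv0 : (0:ℝ) < ((p:ℝ)^h)⁻¹ := inv_pos.2 hp0
  obtain ⟨hz1, hz2⟩ := hz
  by_cases hbig : (p:ℝ)^h < ‖ξ‖
  · have hne : ‖z‖ ≠ ‖-ξ‖ := by rw [norm_neg]; exact ne_of_lt (lt_of_le_of_lt hz1 hbig)
    have : ‖z - ξ‖ = max ‖z‖ ‖-ξ‖ := by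
      rw [sub_eq_add_neg]
      exact IsUltrametricDist.norm_add_eq_max_of_norm_ne_norm hne
    rw [this, norm_neg, max_eq_right (le_of_lt (lt_of_le_of_lt hz1 hbig))]
    have hm : max 1 ‖ξ‖ = ‖ξ‖ := max_eq_right (hp1.trans hbig.le)
    rw [hm]
    calc ((p:ℝ)^h)⁻¹ * ((p:ℝ)^h)⁻¹ * ‖ξ‖ ≤ 1 * 1 * ‖ξ‖ := by
          apply mul_le_mul_of_nonneg_right (by nlinarith) (norm_nonneg _)
      _ = ‖ξ‖ := by ring
  · push_neg at hbig
    have hmax : max 1 ‖ξ‖ ≤ (p:ℝ)^h := max_le hp1 hbig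
    simp only [affinoid, Set.mem_setOf_eq, not_and, not_forall, not_le] at hξ
    obtain ⟨t, ht⟩ := hξ hbig
    have h1 : ((p:ℝ)^h)⁻¹ ≤ ‖z - algebraMap ℚ_[p] K t‖ := hz2 t
    have hne : ‖z - algebraMap ℚ_[p] K t‖ ≠ ‖-(ξ - algebraMap ℚ_[p] K t)‖ := by
      rw [norm_neg]; exact ne_of_gt (lt_of_lt_of_le ht h1)
    have : ‖z - ξ‖ = max ‖z - algebraMap ℚ_[p] K t‖ ‖-(ξ - algebraMap ℚ_[p] K t)‖ := by
      have e : z - ξ = (z - algebraMap ℚ_[p] K t) + -(ξ - algebraMap ℚ_[p] K t) := by ring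
      rw [e]
      exact IsUltrametricDist.norm_add_eq_max_of_norm_ne_norm hne
    rw [this]
    refine le_trans ?_ (le_max_left _ _) |>.trans (le_of_eq rfl)
    calc ((p:ℝ)^h)⁻¹ * ((p:ℝ)^h)⁻¹ * max 1 ‖ξ‖ ≤ ((p:ℝ)^h)⁻¹ * ((p:ℝ)^h)⁻¹ * (p:ℝ)^h := by
          apply mul_le_mul_of_nonneg_left hmax (by positivity)
      _ = ((p:ℝ)^h)⁻¹ := by field_simp
      _ ≤ ‖z - algebraMap ℚ_[p] K t‖ := h1

/-- Vieta -/
theorem vieta {R : Type*} [Field R] {a b c : R} {x y : R}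
    (hx : a*x^2+b*x+c = 0) (hy : a*y^2+b*y+c = 0) (hxy : x ≠ y) :
    a*(x+y) = -b ∧ a*(x*y) = c := by
  have h1 : (x - y)*(a*(x+y)+b) = 0 := by linear_combination hx - hy
  rcases mul_eq_zero.1 h1 with h | h
  · exact absurd (sub_eq_zero.1 h) hxy
  · have hs : a*(x+y) = -b := by linear_combination h
    refine ⟨hs, ?_⟩
    linear_combination x*hs - hx

/-- two rational quadratics with common irrational root are proportional -/
theorem prop_rat {K : Type*} [Field K] [CharZero K] {a b c : ℤ} {x y w : ℚ} {ω : K}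
    (hQ : (a:K)*ω^2 + (b:K)*ω + (c:K) = 0)
    (hQ' : (x:K)*ω^2 + (y:K)*ω + (w:K) = 0)
    (hir : ω ∉ Set.range ((↑) : ℚ → K)) :
    y * a = b * x ∧ w * a = c * x := by
  have key : ((y:K)*(a:K) - (b:K)*(x:K))*ω + ((w:K)*(a:K) - (c:K)*(x:K)) = 0 := by
    linear_combination (a:K)*hQ' - (x:K)*hQ
  have hcast1 : ((y*(a:ℚ) - (b:ℚ)*x : ℚ) : K) = (y:K)*(a:K) - (b:K)*(x:K) := by push_cast; ring
  have hcast2 : ((w*(a:ℚ) - (c:ℚ)*x : ℚ) : K) = (w:K)*(a:K) - (c:K)*(x:K) := by push_cast; ring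
  have h1 : y*(a:ℚ) - (b:ℚ)*x = 0 := by
    by_contra hne
    apply hir
    refine ⟨-(w*(a:ℚ) - (c:ℚ)*x)/(y*(a:ℚ) - (b:ℚ)*x), ?_⟩
    have hcK : ((y*(a:ℚ) - (b:ℚ)*x : ℚ) : K) ≠ 0 := by
      rw [ne_eq, Rat.cast_eq_zero]; exact hne
    rw [Rat.cast_div, Rat.cast_neg, hcast1, hcast2, div_eq_iff (hcast1 ▸ hcK)]
    linear_combination -key
  have h2 : w*(a:ℚ) - (c:ℚ)*x = 0 := by
    have : ((w*(a:ℚ) - (c:ℚ)*x : ℚ) : K) = 0 := by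
      rw [hcast2]
      have h1K : (y:K)*(a:K) - (b:K)*(x:K) = 0 := by
        rw [← hcast1, h1, Rat.cast_zero]
      linear_combination key - ω * h1K
    exact_mod_cast this
  constructor <;> linarith


theorem norm_sq_eq {x y : K} (h : x^2 = y^2) : ‖x‖ = ‖y‖ := by
  have h' : ‖x‖^2 = ‖y‖^2 := by rw [← norm_pow, ← norm_pow, h]
  nlinarith [norm_nonneg x, norm_nonneg y, h']

theorem prim_norm_ge {a b c : ℤ} (hprim : Int.gcd (Int.gcd a b) c = 1)
    (hK : ∀ x : ℚ_[p], ‖algebraMap ℚ_[p] K x‖ = ‖x‖) :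
    1 ≤ max (max ‖(a:K)‖ ‖(b:K)‖) ‖(c:K)‖ := by
  by_contra hlt
  push_neg at hlt
  obtain ⟨h1, h3⟩ := max_lt_iff.1 hlt
  obtain ⟨ha, hb⟩ := max_lt_iff.1 h1
  have hpd : ∀ x : ℤ, ‖(x:K)‖ < 1 → (p:ℤ) ∣ x := by
    intro x hx
    rw [normK_int hK] at hx
    exact Padic.norm_intCast_lt_one_iff.1 hx
  have : (p:ℤ) ∣ (Int.gcd (Int.gcd a b) c : ℤ) :=
    Int.dvd_coe_gcd (Int.dvd_coe_gcd (hpd a ha) (hpd b hb)) (hpd c h3)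
  rw [hprim] at this
  have hp2 : 2 ≤ p := (Fact.out : p.Prime).two_le
  have := Int.le_of_dvd one_pos this
  omega

theorem key_bounds (hK : ∀ x : ℚ_[p], ‖algebraMap ℚ_[p] K x‖ = ‖x‖)
    {h : ℕ} {a b c : ℤ} {w wb sqv : K}
    (ha : a ≠ 0) (hprim : Int.gcd (Int.gcd a b) c = 1)
    (hw : (a:K)*w^2 + (b:K)*w + (c:K) = 0)
    (hwb : (a:K)*wb^2 + (b:K)*wb + (c:K) = 0)
    (hne : w ≠ wb)
    (hsq : sqv^2 = ((b^2 - 4*a*c : ℤ) : K)) :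
    (w ∉ affinoid p K h → wb ∉ affinoid p K h → ∀ z ∈ affinoid p K h,
      (((p:ℝ)^h)⁻¹^4 ≤ ‖(a:K)*z^2 + (b:K)*z + (c:K)‖))
    ∧ ((w ∈ affinoid p K h) → ‖(2:ℚ_[p])‖ * ((p:ℝ)^h)⁻¹^3 ≤ ‖sqv‖) := by
  haveI := ultraK hK
  set P : ℝ := (p:ℝ)^h with hP
  have hp1 : (1:ℝ) ≤ P := one_le_pow₀ (by exact_mod_cast (Fact.out : p.Prime).one_lt.le)
  have hp0 : (0:ℝ) < P := lt_of_lt_of_le zero_lt_one hp1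
  have hPinv1 : P⁻¹ ≤ 1 := inv_le_one_of_one_le₀ hp1
  have hPinv0 : (0:ℝ) < P⁻¹ := inv_pos.2 hp0
  obtain ⟨hsum, hprod⟩ := vieta hw hwb hne
  have haK : (a:K) ≠ 0 := Int.cast_ne_zero.2 ha
  set na := ‖(a:K)‖ with hna
  set nb := ‖(b:K)‖ with hnb
  set nc := ‖(c:K)‖ with hnc
  have hna0 : 0 < na := norm_pos_iff.2 haK
  have hfac : ∀ z : K, (a:K)*z^2+(b:K)*z+(c:K) = (a:K)*(z-w)*(z-wb) := by
    intro z
    linear_combination z*hsum - hprod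
  have hsqK : sqv^2 = (b:K)^2 - 4*(a:K)*(c:K) := by rw [hsq]; push_cast; ring
  have hsq2 : ((a:K)*(w - wb))^2 = sqv^2 := by
    linear_combination ((a:K)*(w+wb) - (b:K))*hsum - 4*(a:K)*hprod - hsqK
  have hnsq : na * ‖w - wb‖ = ‖sqv‖ := by
    rw [hna, ← norm_mul]
    exact norm_sq_eq hsq2
  have hprodn : na * (‖w‖ * ‖wb‖) = nc := by
    rw [hna, hnc, ← norm_mul, ← norm_mul]
    exact congrArg norm hprod
  have hprim1 : (1:ℝ) ≤ max (max na nb) nc := prim_norm_ge hprim hK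
  have h2le : ‖(2:K)‖ ≤ 1 := by
    have : ((2:ℤ):K) = (2:K) := by norm_num
    rw [← this, normK_int hK]
    exact Padic.norm_int_le_one 2
  have h4le : ‖(4:K)‖ ≤ 1 := by
    have : ((4:ℤ):K) = (4:K) := by norm_num
    rw [← this, normK_int hK]
    exact Padic.norm_int_le_one 4
  have hsubmax : ∀ x y : K, ‖x - y‖ ≤ max ‖x‖ ‖y‖ := by
    intro x y
    rw [sub_eq_add_neg]
    exact le_trans (IsUltrametricDist.norm_add_le_max _ _) (by rw [norm_neg])
  have hbn : nb^2 ≤ max (‖sqv‖^2) (na * nc) := by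
    have hb2 : (b:K)^2 = sqv^2 + (4:K)*((a:K)*(c:K)) := by linear_combination -hsqK
    have : nb^2 = ‖(b:K)^2‖ := by rw [norm_pow]
    rw [this, hb2]
    refine le_trans (IsUltrametricDist.norm_add_le_max _ _) ?_
    apply max_le_max
    · rw [norm_pow]
    · rw [norm_mul, norm_mul]
      calc ‖(4:K)‖ * (na * nc) ≤ 1 * (na * nc) := by
            apply mul_le_mul_of_nonneg_right h4le (by positivity)
        _ = na * nc := one_mul _
  constructor
  · -- good branch
    intro hwa hwba z hz
    have d1 := dist_lower hK hz hwa
    have d2 := dist_lower hK hz hwba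
    set X : ℝ := na * (max 1 ‖w‖ * max 1 ‖wb‖) with hX
    have hm1w : (1:ℝ) ≤ max 1 ‖w‖ := le_max_left _ _
    have hm1wb : (1:ℝ) ≤ max 1 ‖wb‖ := le_max_left _ _
    have hmw : ‖w‖ ≤ max 1 ‖w‖ := le_max_right _ _
    have hmwb : ‖wb‖ ≤ max 1 ‖wb‖ := le_max_right _ _
    have hq1 : (1:ℝ) ≤ (max 1 ‖w‖) * (max 1 ‖wb‖) := by nlinarith
    have hXa : na ≤ X := by nlinarith [mul_le_mul_of_nonneg_left hq1 hna0.le]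
    have hq2 : ‖w‖*‖wb‖ ≤ (max 1 ‖w‖)*(max 1 ‖wb‖) :=
      mul_le_mul hmw hmwb (norm_nonneg _) (le_trans zero_le_one hm1w)
    have hXc : nc ≤ X := by
      rw [← hprodn, hX]
      exact mul_le_mul_of_nonneg_left hq2 hna0.le
    have hmm : max ‖w‖ ‖wb‖ ≤ max 1 ‖w‖ * max 1 ‖wb‖ := by
      apply max_le
      · nlinarith [norm_nonneg w]
      · nlinarith [norm_nonneg wb]
    have hXsq : ‖sqv‖ ≤ X := by
      rw [← hnsq, hX]
      have h1 : ‖w - wb‖ ≤ max ‖w‖ ‖wb‖ := hsubmax w wb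
      exact mul_le_mul_of_nonneg_left (le_trans h1 hmm) hna0.le
    have hX0 : (0:ℝ) < X := by nlinarith
    have hXb : nb ≤ X := by
      have h2 : nb^2 ≤ X^2 := by
        refine le_trans hbn (max_le ?_ ?_)
        · exact pow_le_pow_left₀ (norm_nonneg _) hXsq 2
        · calc na * nc ≤ X * X := mul_le_mul hXa hXc (by rw [hnc]; positivity) hX0.le
            _ = X^2 := (sq X).symm
      nlinarith [norm_nonneg (b:K)]
    have hX1 : (1:ℝ) ≤ X := le_trans hprim1 (max_le (max_le hXa hXb) hXc)
    rw [hfac z, norm_mul, norm_mul, ← hna]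
    calc P⁻¹^4 = P⁻¹^4 * 1 := (mul_one _).symm
      _ ≤ P⁻¹^4 * X := by
          apply mul_le_mul_of_nonneg_left hX1 (by positivity)
      _ = na * ((P⁻¹*P⁻¹* max 1 ‖w‖) * (P⁻¹*P⁻¹* max 1 ‖wb‖)) := by rw [hX]; ring
      _ ≤ na * (‖z - w‖ * ‖z - wb‖) := by
          apply mul_le_mul_of_nonneg_left ?_ (le_of_lt hna0)
          apply mul_le_mul d1 d2 (by positivity) (norm_nonneg _)
      _ = na * ‖z - w‖ * ‖z - wb‖ := by ring
  · -- bad branch : w in affinoid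
    intro hwaff
    obtain ⟨hw1, hw2⟩ := hwaff
    have ht := hw2 (((-(b:ℚ)/(2*(a:ℚ)) : ℚ)) : ℚ_[p])
    have htK : (algebraMap ℚ_[p] K) (((-(b:ℚ)/(2*(a:ℚ)) : ℚ)) : ℚ_[p])
        = ((-(b:ℚ)/(2*(a:ℚ)) : ℚ) : K) := map_ratCast _ _
    rw [htK] at ht
    have h2aK : (2:K)*(a:K) ≠ 0 := by
      apply mul_ne_zero _ haK
      exact two_ne_zero
    have hXeq : ((2:K)*(a:K)) * (w - ((-(b:ℚ)/(2*(a:ℚ)) : ℚ) : K)) = (2:K)*(a:K)*w + (b:K) := by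
      have hcast : ((-(b:ℚ)/(2*(a:ℚ)) : ℚ) : K) = -(b:K)/((2:K)*(a:K)) := by push_cast; ring
      rw [hcast]
      field_simp
      ring
    have hsq3 : ((2:K)*(a:K)*w + (b:K))^2 = sqv^2 := by
      linear_combination 4*(a:K)*hw - hsqK
    have hn3 : ‖(2:K)*(a:K)*w + (b:K)‖ = ‖sqv‖ := norm_sq_eq hsq3
    have hlow : ‖(2:K)‖ * na * P⁻¹ ≤ ‖sqv‖ := by
      rw [← hn3, ← hXeq, norm_mul, norm_mul, ← hna]
      have := mul_le_mul_of_nonneg_left ht (by positivity : (0:ℝ) ≤ ‖(2:K)‖ * na)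
      calc ‖(2:K)‖ * na * P⁻¹ = ‖(2:K)‖ * na * P⁻¹ := rfl
        _ ≤ ‖(2:K)‖ * na * ‖w - ((-(b:ℚ)/(2*(a:ℚ)) : ℚ) : K)‖ := by
            apply mul_le_mul_of_nonneg_left ht (by positivity)
        _ = ‖(2:K)‖ * (na * ‖w - ((-(b:ℚ)/(2*(a:ℚ)) : ℚ) : K)‖) := by ring
        _ = ‖(2:K)‖ * (‖(a:K)‖ * ‖w - ((-(b:ℚ)/(2*(a:ℚ)) : ℚ) : K)‖) := rfl
        _ = ‖(2:K)‖ * ‖(a:K)‖ * ‖w - ((-(b:ℚ)/(2*(a:ℚ)) : ℚ) : K)‖ := by ring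
    -- bound coefficients
    have hwbn : ‖wb‖ ≤ max P (‖sqv‖/na) := by
      have h1 : ‖wb‖ = ‖w - (w - wb)‖ := by congr 1; ring
      rw [h1]
      refine le_trans (hsubmax _ _) (max_le_max hw1 ?_)
      rw [le_div_iff₀ hna0, mul_comm, hnsq]
    have hcb : nc ≤ max (na*P^2) (‖sqv‖*P) := by
      rw [← hprodn]
      rcases le_max_iff.1 hwbn with hcase | hcase
      · refine le_max_of_le_left ?_
        calc na * (‖w‖*‖wb‖) ≤ na * (P*P) := by
              apply mul_le_mul_of_nonneg_left ?_ (le_of_lt hna0)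
              apply mul_le_mul hw1 hcase (norm_nonneg _) hp0.le
          _ = na * P^2 := by ring
      · refine le_max_of_le_right ?_
        calc na * (‖w‖*‖wb‖) ≤ na * (P * (‖sqv‖/na)) := by
              apply mul_le_mul_of_nonneg_left ?_ (le_of_lt hna0)
              apply mul_le_mul hw1 hcase (norm_nonneg _) hp0.le
          _ = ‖sqv‖ * P := by field_simp
    have hbb : nb ≤ max ‖sqv‖ (na*P) := by
      have h1 : (b:K) = ((2:K)*(a:K)*w + (b:K)) - (2:K)*((a:K)*w) := by ring
      rw [hnb, h1]
      refine le_trans (hsubmax _ _) (max_le_max (le_of_eq hn3) ?_)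
      rw [norm_mul, norm_mul, ← hna]
      calc ‖(2:K)‖ * (na * ‖w‖) ≤ 1 * (na * P) := by
            apply mul_le_mul h2le ?_ (by positivity) zero_le_one
            exact mul_le_mul_of_nonneg_left hw1 (le_of_lt hna0)
        _ = na * P := one_mul _
    have hcase : (1:ℝ) ≤ max (na*P^2) (‖sqv‖*P) := by
      have hP2 : (1:ℝ) ≤ P^2 := by nlinarith
      refine le_trans hprim1 (max_le (max_le ?_ ?_) hcb)
      · refine le_max_of_le_left ?_
        nlinarith [mul_le_mul_of_nonneg_left hP2 hna0.le]
      · refine le_trans hbb (max_le ?_ ?_)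
        · refine le_max_of_le_right ?_
          nlinarith [mul_le_mul_of_nonneg_left hp1 (norm_nonneg sqv)]
        · refine le_max_of_le_left ?_
          nlinarith [mul_le_mul_of_nonneg_left hp1 (mul_nonneg hna0.le hp0.le)]
    have h2pos : 0 < ‖(2:K)‖ := norm_pos_iff.2 two_ne_zero
    have h2K : ‖(2:K)‖ = ‖(2:ℚ_[p])‖ := by
      have : ((2:ℤ):K) = (2:K) := by norm_num
      rw [← this, normK_int hK]
      norm_num
    rw [← h2K]
    rcases le_max_iff.1 hcase with hc1 | hc1
    · -- na ≥ P⁻¹^2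
      have hna_ge : P⁻¹^2 ≤ na := by
        have h' := mul_le_mul_of_nonneg_left hc1 (by positivity : (0:ℝ) ≤ P⁻¹^2)
        have h'' : P⁻¹^2 * (na*P^2) = na := by field_simp
        rw [mul_one, h''] at h'
        exact h'
      calc ‖(2:K)‖ * P⁻¹^3 = ‖(2:K)‖ * P⁻¹^2 * P⁻¹ := by ring
        _ ≤ ‖(2:K)‖ * na * P⁻¹ := by
            apply mul_le_mul_of_nonneg_right ?_ hPinv0.le
            exact mul_le_mul_of_nonneg_left hna_ge h2pos.le
        _ ≤ ‖sqv‖ := hlow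
    · -- ‖sqv‖ ≥ P⁻¹
      have hs_ge : P⁻¹ ≤ ‖sqv‖ := by
        have h' := mul_le_mul_of_nonneg_left hc1 (by positivity : (0:ℝ) ≤ P⁻¹)
        have h'' : P⁻¹ * (‖sqv‖*P) = ‖sqv‖ := by field_simp
        rw [mul_one, h''] at h'
        exact h'
      calc ‖(2:K)‖ * P⁻¹^3 ≤ 1 * P⁻¹ := by
            have : P⁻¹^3 ≤ P⁻¹ := by
              have := pow_le_pow_of_le_one hPinv0.le hPinv1 (show 1 ≤ 3 by norm_num)
              simpa using this
            apply mul_le_mul h2le this (by positivity) zero_le_one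
        _ = P⁻¹ := one_mul _
        _ ≤ ‖sqv‖ := hs_ge

section PInt
variable {p : ℕ}

theorem IsPInt.int (n : ℤ) : IsPInt p (n : ℚ) := ⟨n, 0, by simp⟩

theorem IsPInt.add {x y : ℚ} (hx : IsPInt p x) (hy : IsPInt p y) (hp : (p:ℚ) ≠ 0) :
    IsPInt p (x + y) := by
  obtain ⟨u, n, rfl⟩ := hx; obtain ⟨v, m, rfl⟩ := hy
  refine ⟨u * (p:ℤ)^m + v * (p:ℤ)^n, n + m, ?_⟩
  have h1 : ((p:ℚ))^n ≠ 0 := pow_ne_zero _ hp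
  have h2 : ((p:ℚ))^m ≠ 0 := pow_ne_zero _ hp
  push_cast
  rw [div_add_div _ _ h1 h2, pow_add]
  ring_nf

theorem IsPInt.mul {x y : ℚ} (hx : IsPInt p x) (hy : IsPInt p y) :
    IsPInt p (x * y) := by
  obtain ⟨u, n, rfl⟩ := hx; obtain ⟨v, m, rfl⟩ := hy
  refine ⟨u * v, n + m, ?_⟩
  push_cast
  rw [pow_add]
  ring

theorem IsPInt.bezout {a b c : ℤ} (h1 : Int.gcd (Int.gcd a b) c = 1) {μ : ℚ}
    (hp : (p:ℚ) ≠ 0)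
    (ha : IsPInt p (μ*a)) (hb : IsPInt p (μ*b)) (hc : IsPInt p (μ*c)) : IsPInt p μ := by
  obtain ⟨X, Y, hXY⟩ : ∃ X Y : ℤ, (Int.gcd a b : ℤ) = a * X + b * Y :=
    ⟨Int.gcdA a b, Int.gcdB a b, Int.gcd_eq_gcd_ab a b⟩
  obtain ⟨Z, W, hZW⟩ : ∃ Z W : ℤ, (Int.gcd (Int.gcd a b) c : ℤ) = (Int.gcd a b : ℤ) * Z + c * W :=
    ⟨Int.gcdA _ c, Int.gcdB _ c, Int.gcd_eq_gcd_ab _ c⟩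
  rw [h1] at hZW
  rw [hXY] at hZW
  have h1' : (1:ℚ) = ((a:ℚ) * X + (b:ℚ) * Y) * Z + (c:ℚ) * W := by exact_mod_cast hZW
  have key : μ = (μ*a) * (X*Z : ℤ) + ((μ*b) * (Y*Z : ℤ) + (μ*c) * (W : ℤ)) := by
    push_cast
    linear_combination μ * h1'
  rw [key]
  exact (ha.mul (IsPInt.int _)).add ((hb.mul (IsPInt.int _)).add (hc.mul (IsPInt.int _)) hp) hp

theorem IsPInt.unit_sq (hp : p.Prime) {μ ν : ℚ} (hμ : IsPInt p μ) (hν : IsPInt p ν)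
    (h : μ * ν = 1) : ∃ j : ℤ, ν^2 = (p:ℚ)^j := by
  obtain ⟨u, n, rfl⟩ := hμ; obtain ⟨v, m, rfl⟩ := hν
  have hp0 : (p:ℚ) ≠ 0 := by exact_mod_cast hp.ne_zero
  have huv : u * v = (p:ℤ)^(n+m) := by
    have : ((u * v : ℤ) : ℚ) = (((p:ℤ)^(n+m) : ℤ) : ℚ) := by
      push_cast
      rw [pow_add]
      field_simp at h
      linarith [h]
    exact_mod_cast this
  have hvd : v.natAbs ∣ p^(n+m) := by
    have : (v : ℤ) ∣ (p:ℤ)^(n+m) := Dvd.intro_left u huv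
    simpa [Int.natAbs_pow] using Int.natAbs_dvd_natAbs.2 this
  obtain ⟨i, hi, hvi⟩ := (Nat.dvd_prime_pow hp).1 hvd
  have hv2 : (v:ℚ)^2 = (p:ℚ)^(2*i) := by
    have h2 : (v.natAbs : ℚ)^2 = ((p:ℚ))^(2*i) := by
      rw [hvi]; push_cast; ring
    calc (v:ℚ)^2 = |(v:ℚ)|^2 := (sq_abs _).symm
      _ = (v.natAbs : ℚ)^2 := by rw [Nat.cast_natAbs, Int.cast_abs]
      _ = _ := h2
  refine ⟨(2*i:ℤ) - (2*m:ℤ), ?_⟩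
  have hden : ((p:ℚ)^m)^2 = (p:ℚ)^(2*m) := by rw [← pow_mul, mul_comm]
  rw [div_pow, hv2, hden]
  rw [← zpow_natCast (p:ℚ) (2*i), ← zpow_natCast (p:ℚ) (2*m), ← zpow_sub₀ hp0]
  push_cast
  ring_nf

theorem primitive_reduce {A B C : ℤ} (hA : A ≠ 0) :
    ∃ a b c g : ℤ, g ≠ 0 ∧ A = g*a ∧ B = g*b ∧ C = g*c ∧ a ≠ 0 ∧
      Int.gcd (Int.gcd a b) c = 1 := by
  set n : ℕ := Int.gcd (Int.gcd A B) C with hn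
  have hnn0 : n ≠ 0 := by
    simp only [hn, ne_eq, Int.gcd_eq_zero_iff]
    intro ⟨h1, _⟩
    rw [Int.natCast_eq_zero, Int.gcd_eq_zero_iff] at h1
    exact hA h1.1
  have hn0 : (n:ℤ) ≠ 0 := by exact_mod_cast hnn0
  have hdA : (n:ℤ) ∣ A := dvd_trans (Int.gcd_dvd_left _ _) (Int.gcd_dvd_left _ _)
  have hdB : (n:ℤ) ∣ B := dvd_trans (Int.gcd_dvd_left _ _) (Int.gcd_dvd_right _ _)
  have hdC : (n:ℤ) ∣ C := Int.gcd_dvd_right _ _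
  obtain ⟨a, hA'⟩ := hdA
  obtain ⟨b, hB'⟩ := hdB
  obtain ⟨c, hC'⟩ := hdC
  refine ⟨a, b, c, n, hn0, hA', hB', hC', ?_, ?_⟩
  · rintro rfl
    rw [mul_zero] at hA'
    exact hA hA'
  · have e1 : Int.gcd A B = n * Int.gcd a b := by
      rw [hA', hB', Int.gcd_mul_left]
      simp
    have e2 : n = Int.gcd ((Int.gcd A B : ℕ) : ℤ) C := hn
    rw [e1, hC'] at e2
    have e3 : (((n * Int.gcd a b : ℕ)) : ℤ) = (n:ℤ) * ((Int.gcd a b : ℕ) : ℤ) := by push_cast; ring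
    rw [e3, Int.gcd_mul_left] at e2
    simp only [Int.natAbs_natCast] at e2
    have h' : n * 1 = n * Int.gcd ((Int.gcd a b : ℕ) : ℤ) c := by simpa using e2
    exact (Nat.eq_of_mul_eq_mul_left (Nat.pos_of_ne_zero hnn0) h').symm

end PInt

/-- existence of a primitive integral quadratic form vanishing at a quadratic irrationality -/
theorem exists_Q0 {K : Type*} [Field K] [CharZero K] (F : Subfield K)
    (hF2 : Module.finrank ℚ F = 2) (τ : F)
    (hτQ : (τ : K) ∉ Set.range ((↑) : ℚ → K)) :
    ∃ a b c : ℤ, a ≠ 0 ∧ Int.gcd (Int.gcd a b) c = 1 ∧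
      (a:K)*(τ:K)^2 + (b:K)*(τ:K) + (c:K) = 0 := by
  haveI : FiniteDimensional ℚ F := FiniteDimensional.of_finrank_pos (by omega)
  have hli : ¬ LinearIndependent ℚ ![(1:F), τ, τ^2] := by
    intro hind
    have := hind.fintype_card_le_finrank
    simp [hF2] at this
  rw [Fintype.not_linearIndependent_iff] at hli
  obtain ⟨g, hrel, ⟨i, hi⟩⟩ := hli
  have hrel' : g 0 • (1:F) + g 1 • τ + g 2 • τ^2 = 0 := by
    rw [Fin.sum_univ_three] at hrel
    simpa using hrel
  have hrelK : ((g 0 : ℚ):K) + ((g 1 : ℚ):K)*(τ:K) + ((g 2 : ℚ):K)*(τ:K)^2 = 0 := by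
    have := congrArg (F.subtype) hrel'
    simp only [map_add, map_smul, map_one, map_pow, map_zero] at this
    simpa [Rat.smul_def, Subfield.coe_subtype] using this
  -- the leading coefficient is nonzero
  have hg2 : g 2 ≠ 0 := by
    intro h2
    have hg1 : g 1 = 0 := by
      by_contra h1
      apply hτQ
      refine ⟨-(g 0)/(g 1), ?_⟩
      have h1K : ((g 1 : ℚ):K) ≠ 0 := by exact_mod_cast h1
      rw [Rat.cast_div, Rat.cast_neg, div_eq_iff h1K]
      rw [h2] at hrelK
      push_cast at hrelK ⊢
      linear_combination -hrelK
    have hg0 : g 0 = 0 := by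
      rw [h2, hg1] at hrelK
      have hz : ((g 0 : ℚ):K) = 0 := by push_cast at hrelK ⊢; linear_combination hrelK
      exact_mod_cast hz
    fin_cases i <;> simp_all
  -- clear denominators
  set d : ℚ := ((g 2).den : ℚ) * ((g 1).den : ℚ) * ((g 0).den : ℚ) with hd
  have hden : ∀ q : ℚ, (q.den : ℚ) ≠ 0 := fun q => by exact_mod_cast q.den_nz
  have hd0 : d ≠ 0 := by
    simp only [hd]
    exact mul_ne_zero (mul_ne_zero (hden _) (hden _)) (hden _)
  have hnum : ∀ q : ℚ, q * (q.den : ℚ) = (q.num : ℚ) := fun q => by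
    rw [mul_comm]
    exact_mod_cast Rat.den_mul_eq_num q
  set A : ℤ := (g 2).num * ((g 1).den * (g 0).den) with hA
  set B : ℤ := (g 1).num * ((g 2).den * (g 0).den) with hB
  set C : ℤ := (g 0).num * ((g 2).den * (g 1).den) with hC
  have hAq : (A : ℚ) = g 2 * d := by
    rw [hA, hd]; push_cast; rw [← hnum (g 2)]; ring
  have hBq : (B : ℚ) = g 1 * d := by
    rw [hB, hd]; push_cast; rw [← hnum (g 1)]; ring
  have hCq : (C : ℚ) = g 0 * d := by
    rw [hC, hd]; push_cast; rw [← hnum (g 0)]; ring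
  have hA0 : A ≠ 0 := by
    intro h0
    apply hg2
    have : (A:ℚ) = 0 := by exact_mod_cast h0
    rw [hAq] at this
    rcases mul_eq_zero.1 this with h | h
    · exact h
    · exact absurd h hd0
  have hrelK2 : (A:K)*(τ:K)^2 + (B:K)*(τ:K) + (C:K) = 0 := by
    have hdK : ((d:ℚ):K) ≠ 0 := by exact_mod_cast hd0
    have e : (A:K) = ((g 2 : ℚ):K) * ((d:ℚ):K) := by
      rw [← Rat.cast_mul, ← hAq]; push_cast; ring
    have eB : (B:K) = ((g 1 : ℚ):K) * ((d:ℚ):K) := by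
      rw [← Rat.cast_mul, ← hBq]; push_cast; ring
    have eC : (C:K) = ((g 0 : ℚ):K) * ((d:ℚ):K) := by
      rw [← Rat.cast_mul, ← hCq]; push_cast; ring
    rw [e, eB, eC]
    linear_combination ((d:ℚ):K) * hrelK
  obtain ⟨a, b, c, g', hg'0, hAe, hBe, hCe, ha0, hgcd⟩ := primitive_reduce (A:=A) (B:=B) (C:=C) hA0
  refine ⟨a, b, c, ha0, hgcd, ?_⟩
  have hgK : ((g':ℤ):K) ≠ 0 := by exact_mod_cast hg'0
  have : ((g':ℤ):K) * ((a:K)*(τ:K)^2 + (b:K)*(τ:K) + (c:K)) = 0 := by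
    rw [hAe, hBe, hCe] at hrelK2
    push_cast at hrelK2 ⊢
    linear_combination hrelK2
  exact (mul_eq_zero.1 this).resolve_left hgK

theorem isPInt_comb {p : ℕ} (hp0 : (p:ℚ) ≠ 0) {x y z : ℚ} (n1 n2 n3 : ℤ)
    (hx : IsPInt p x) (hy : IsPInt p y) (hz : IsPInt p z) :
    IsPInt p ((n1:ℚ)*x + ((n2:ℚ)*y + (n3:ℚ)*z)) :=
  (((IsPInt.int n1).mul hx).add (((IsPInt.int n2).mul hy).add
    ((IsPInt.int n3).mul hz) hp0) hp0)

theorem disc_rigid {K : Type*} [Field K] [CharZero K] {p : ℕ} (hp : p.Prime)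
    {τK ω : K} {α β γ δ : ℚ}
    (hα : IsPInt p α) (hβ : IsPInt p β) (hγ : IsPInt p γ) (hδ : IsPInt p δ)
    (hdet : α*δ - β*γ = 1)
    (hτir : τK ∉ Set.range ((↑) : ℚ → K)) (hωir : ω ∉ Set.range ((↑) : ℚ → K))
    {a₀ b₀ c₀ : ℤ} (ha₀ : a₀ ≠ 0) (hprim₀ : Int.gcd (Int.gcd a₀ b₀) c₀ = 1)
    (hQ₀ : (a₀:K)*τK^2 + (b₀:K)*τK + (c₀:K) = 0)
    {a b c : ℤ} (ha : a ≠ 0) (hprim : Int.gcd (Int.gcd a b) c = 1)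
    (hQ : (a:K)*ω^2 + (b:K)*ω + (c:K) = 0)
    (hmob : ω = ((α:K)*τK + (β:K))/((γ:K)*τK + (δ:K))) :
    ∃ j : ℤ, ((b^2 - 4*a*c : ℤ) : ℚ) = ((b₀^2 - 4*a₀*c₀ : ℤ) : ℚ) * (p:ℚ)^j := by
  have hp0 : (p:ℚ) ≠ 0 := by exact_mod_cast hp.ne_zero
  have hdetK : (α:K)*(δ:K) - (β:K)*(γ:K) = 1 := by
    have := congrArg ((↑) : ℚ → K) hdet
    push_cast at this
    exact this
  set u : K := (γ:K)*τK + (δ:K) with hu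
  have hu0 : u ≠ 0 := by
    intro h0
    by_cases hγ0 : γ = 0
    · have hδ0 : (δ:K) = 0 := by
        rw [hu, hγ0] at h0
        simpa using h0
      have : δ = 0 := by exact_mod_cast hδ0
      rw [hγ0, this] at hdet
      norm_num at hdet
    · apply hτir
      refine ⟨-δ/γ, ?_⟩
      have hγK : (γ:K) ≠ 0 := by exact_mod_cast hγ0
      rw [Rat.cast_div, Rat.cast_neg, div_eq_iff hγK]
      rw [hu] at h0
      linear_combination -h0
  have hωu : ω * u = (α:K)*τK + (β:K) := by
    rw [hmob]
    exact div_mul_cancel₀ _ hu0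
  -- forward substituted form, vanishing at τK
  set a'' : ℚ := (a:ℚ)*α^2 + (b:ℚ)*α*γ + (c:ℚ)*γ^2 with ha''
  set b'' : ℚ := 2*(a:ℚ)*α*β + (b:ℚ)*(α*δ+β*γ) + 2*(c:ℚ)*γ*δ with hb''
  set c'' : ℚ := (a:ℚ)*β^2 + (b:ℚ)*β*δ + (c:ℚ)*δ^2 with hc''
  have hQ'' : ((a'':ℚ):K)*τK^2 + ((b'':ℚ):K)*τK + ((c'':ℚ):K) = 0 := by
    rw [ha'', hb'', hc'']
    push_cast
    linear_combination u^2*hQ - ((a:K)*(ω*u + ((α:K)*τK+(β:K))) + (b:K)*u) * hωu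
  -- backward substituted form, vanishing at ω
  set a' : ℚ := (a₀:ℚ)*δ^2 - (b₀:ℚ)*δ*γ + (c₀:ℚ)*γ^2 with ha'
  set b' : ℚ := -2*(a₀:ℚ)*β*δ + (b₀:ℚ)*(α*δ+β*γ) - 2*(c₀:ℚ)*α*γ with hb'
  set c' : ℚ := (a₀:ℚ)*β^2 - (b₀:ℚ)*α*β + (c₀:ℚ)*α^2 with hc'
  have e1 : ((δ:K)*ω - (β:K)) * u = τK := by
    linear_combination (δ:K)*hωu + τK*hdetK
  have e2 : (-(γ:K)*ω + (α:K)) * u = 1 := by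
    linear_combination -(γ:K)*hωu + hdetK
  have key : u^2 * (((a':ℚ):K)*ω^2 + ((b':ℚ):K)*ω + ((c':ℚ):K)) = 0 := by
    rw [ha', hb', hc']
    push_cast
    linear_combination hQ₀ +
      ((a₀:K)*((((δ:K)*ω - (β:K)) * u)+τK) + (b₀:K)*((-(γ:K)*ω + (α:K)) * u))*e1 +
      ((b₀:K)*τK + (c₀:K)*(((-(γ:K)*ω + (α:K)) * u)+1))*e2
  have hQ' : ((a':ℚ):K)*ω^2 + ((b':ℚ):K)*ω + ((c':ℚ):K) = 0 := by
    rcases mul_eq_zero.1 key with h0 | h0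
    · exact absurd (pow_eq_zero_iff (by norm_num) |>.1 h0) hu0
    · exact h0
  obtain ⟨hb1, hc1⟩ := prop_rat hQ hQ' hωir
  obtain ⟨hb2, hc2⟩ := prop_rat hQ₀ hQ'' hτir
  have haq : (a:ℚ) ≠ 0 := by exact_mod_cast ha
  have ha₀q : (a₀:ℚ) ≠ 0 := by exact_mod_cast ha₀
  set μ : ℚ := a'/(a:ℚ) with hμ
  set ν : ℚ := a''/(a₀:ℚ) with hν
  have hμa : μ*(a:ℚ) = a' := by rw [hμ]; field_simp
  have hμb : μ*(b:ℚ) = b' := by rw [hμ]; field_simp; linear_combination -hb1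
  have hμc : μ*(c:ℚ) = c' := by rw [hμ]; field_simp; linear_combination -hc1
  have hνa : ν*(a₀:ℚ) = a'' := by rw [hν]; field_simp
  have hνb : ν*(b₀:ℚ) = b'' := by rw [hν]; field_simp; linear_combination -hb2
  have hνc : ν*(c₀:ℚ) = c'' := by rw [hν]; field_simp; linear_combination -hc2
  -- IsPInt facts
  have hPa' : IsPInt p a' := by
    rw [ha']
    have := isPInt_comb hp0 a₀ (-b₀) c₀ (hδ.mul hδ) (hδ.mul hγ) (hγ.mul hγ)
    convert this using 1
    push_cast
    ring
  have hPb' : IsPInt p b' := by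
    rw [hb']
    have := isPInt_comb hp0 (-2*a₀) b₀ (-2*c₀) (hβ.mul hδ)
      ((hα.mul hδ).add (hβ.mul hγ) hp0) (hα.mul hγ)
    convert this using 1
    push_cast
    ring
  have hPc' : IsPInt p c' := by
    rw [hc']
    have := isPInt_comb hp0 a₀ (-b₀) c₀ (hβ.mul hβ) (hα.mul hβ) (hα.mul hα)
    convert this using 1
    push_cast
    ring
  have hPa'' : IsPInt p a'' := by
    rw [ha'']
    have := isPInt_comb hp0 a b c (hα.mul hα) (hα.mul hγ) (hγ.mul hγ)
    convert this using 1
    push_cast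
    ring
  have hPb'' : IsPInt p b'' := by
    rw [hb'']
    have := isPInt_comb hp0 (2*a) b (2*c) (hα.mul hβ)
      ((hα.mul hδ).add (hβ.mul hγ) hp0) (hγ.mul hδ)
    convert this using 1
    push_cast
    ring
  have hPc'' : IsPInt p c'' := by
    rw [hc'']
    have := isPInt_comb hp0 a b c (hβ.mul hβ) (hβ.mul hδ) (hδ.mul hδ)
    convert this using 1
    push_cast
    ring
  have hμP : IsPInt p μ :=
    IsPInt.bezout hprim hp0 (hμa ▸ hPa') (hμb ▸ hPb') (hμc ▸ hPc')
  have hνP : IsPInt p ν :=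
    IsPInt.bezout hprim₀ hp0 (hνa ▸ hPa'') (hνb ▸ hPb'') (hνc ▸ hPc'')
  -- μ * ν = 1
  have hback : a'*α^2 + b'*α*γ + c'*γ^2 = (a₀:ℚ) := by
    rw [ha', hb', hc']
    linear_combination ((a₀:ℚ)*(α*δ-β*γ+1))*hdet
  have hμν : μ * ν = 1 := by
    have h1 : (a₀:ℚ) = μ * a'' := by
      rw [← hback, ← hμa, ← hμb, ← hμc, ha'']
      ring
    have h2 : (a₀:ℚ) = μ * (ν * (a₀:ℚ)) := by rw [hνa]; exact h1
    have h3 : (a₀:ℚ) * (μ*ν) = (a₀:ℚ) * 1 := by linear_combination -h2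
    exact mul_left_cancel₀ ha₀q h3
  obtain ⟨j, hj⟩ := IsPInt.unit_sq hp hμP hνP hμν
  refine ⟨j, ?_⟩
  have hdisc1 : b''^2 - 4*a''*c'' = ((b:ℚ)^2 - 4*(a:ℚ)*(c:ℚ)) := by
    rw [ha'', hb'', hc'']
    linear_combination (((b:ℚ)^2-4*(a:ℚ)*(c:ℚ))*(α*δ-β*γ+1))*hdet
  have hdisc2 : b''^2 - 4*a''*c'' = ν^2*((b₀:ℚ)^2 - 4*(a₀:ℚ)*(c₀:ℚ)) := by
    rw [← hνa, ← hνb, ← hνc]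
    ring
  push_cast
  rw [← hdisc1, hdisc2, hj]
  ring

end Aux


/-- Let `F ⊂ ℂ_p` be a real quadratic subfield with real embedding `ι`
and nontrivial automorphism `σ`, and `τ ∈ F ∖ ℚ`, `τ ∉ ℚ_p`.  Let `Σ` be the set of
`SL₂(ℤ[1/p])`-translates `ω` of `τ` with `ι(ω)·ι(ω′) < 0`; to `ω ∈ Σ` attach the
unique primitive integral quadratic form `Q_ω = [a_ω,b_ω,c_ω]` vanishing at `ω` whose
first real root is `ι(ω)`, of discriminant `D_ω > 0`, and a square root `c_ω ∈ ℂ_p` of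
`D_ω`.  Then for every `h ≥ 0` and `ε > 0, all but finitely many `ω ∈ Σ` satisfy:
`Q_ω(z,1) ≠ 0` on `H_p^{≤h}` and `sup_{z} |c_ω^k·Q_ω(z,1)^{−k}| < ε`; and the series
`Sum_ω sgn(ω)·c_ω^k·Q_ω(z,1)^{−k}` converges uniformly on `H_p^{≤h}` after removing the
finitely many terms whose form vanishes somewhere on `H_p^{≤h}`.
Here `ℂ_p` is modelled by a complete algebraically closed normed field `K` equipped
with an isometric `ℚ_[p]`-algebra structure. -/
theorem stmt3 (p : ℕ) [Fact p.Prime]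
    (K : Type*) [NormedField K] [Algebra ℚ_[p] K] [IsAlgClosed K] [CompleteSpace K]
    [CharZero K]
    (hK : ∀ x : ℚ_[p], ‖algebraMap ℚ_[p] K x‖ = ‖x‖)
    (k : ℕ) (hk : 1 ≤ k)
    (F : Subfield K) (hF2 : Module.finrank ℚ F = 2)
    (ι : F →+* ℝ) (σ : F ≃+* F) (hσ : σ ≠ RingEquiv.refl F)
    (τ : F) (hτQ : (τ : K) ∉ Set.range ((↑) : ℚ → K))
    (hτp : (τ : K) ∉ Set.range (algebraMap ℚ_[p] K))
    (SigmaSet : Set F)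
    (hSigma : SigmaSet = {ω : F |
      (∃ a b c d : ℚ, IsPInt p a ∧ IsPInt p b ∧ IsPInt p c ∧ IsPInt p d ∧
        a * d - b * c = 1 ∧
        (ω : K) = ((a : K) * (τ : K) + (b : K)) / ((c : K) * (τ : K) + (d : K))) ∧
      ι ω * ι (σ ω) < 0})
    (qa qb qc : F → ℤ) (sq : F → K)
    (hform : ∀ ω ∈ SigmaSet,
      qa ω ≠ 0 ∧
      Int.gcd (Int.gcd (qa ω) (qb ω)) (qc ω) = 1 ∧
      (qa ω : K) * (ω : K) ^ 2 + (qb ω : K) * (ω : K) + (qc ω : K) = 0 ∧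
      0 < (qb ω) ^ 2 - 4 * (qa ω) * (qc ω) ∧
      ι ω = (-(qb ω : ℝ) +
          Real.sqrt (((qb ω) ^ 2 - 4 * (qa ω) * (qc ω) : ℤ) : ℝ)) / (2 * (qa ω : ℝ)) ∧
      (sq ω) ^ 2 = (((qb ω) ^ 2 - 4 * (qa ω) * (qc ω) : ℤ) : K)) :
    (∀ (h : ℕ), ∀ ε > (0 : ℝ),
      {ω ∈ SigmaSet | ¬ (∀ z ∈ affinoid p K h,
        ((qa ω : K) * z ^ 2 + (qb ω : K) * z + (qc ω : K) ≠ 0) ∧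
        ‖(sq ω) ^ k *
            ((qa ω : K) * z ^ 2 + (qb ω : K) * z + (qc ω : K)) ^ (-(k : ℤ))‖ < ε)}.Finite) ∧
    (∀ h : ℕ, ∃ g : K → K,
      TendstoUniformlyOn
        (fun (T : Finset {ω : F // ω ∈ SigmaSet ∧ ∀ z ∈ affinoid p K h,
            (qa ω : K) * z ^ 2 + (qb ω : K) * z + (qc ω : K) ≠ 0}) (z : K) =>
          ∑ ω ∈ T, (if 0 ≤ ι ω.1 then (1 : K) else -1) * (sq ω.1) ^ k *
            ((qa ω.1 : K) * z ^ 2 + (qb ω.1 : K) * z + (qc ω.1 : K)) ^ (-(k : ℤ)))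
        g atTop (affinoid p K h)) := by
  classical
  have hp : p.Prime := Fact.out
  obtain ⟨a₀, b₀, c₀, ha₀, hprim₀, hQ₀⟩ := exists_Q0 F hF2 τ hτQ
  set D₀ : ℤ := b₀^2 - 4*a₀*c₀ with hD₀def
  -- derived data for each ω ∈ Σ
  have hdata : ∀ ω ∈ SigmaSet,
      ((qa ω:K)*((σ ω : F):K)^2 + (qb ω:K)*((σ ω : F):K) + (qc ω:K) = 0) ∧
      ((ω:K) ≠ ((σ ω : F):K)) ∧
      ((ω:K) ∉ Set.range ((↑) : ℚ → K)) ∧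
      (qa ω * qc ω < 0) := by
    intro ω hω
    obtain ⟨haω, hprimω, hQω, hDω, hιω, hsqω⟩ := hform ω hω
    have hsign : ι ω * ι (σ ω) < 0 := by
      rw [hSigma] at hω
      exact hω.2
    have hQF : (qa ω:F)*ω^2 + (qb ω:F)*ω + (qc ω:F) = 0 := by
      have : (((qa ω:F)*ω^2 + (qb ω:F)*ω + (qc ω:F) : F) : K) = ((0:F):K) := by
        push_cast
        exact hQω
      exact_mod_cast this
    have hQFσ : (qa ω:F)*(σ ω)^2 + (qb ω:F)*(σ ω) + (qc ω:F) = 0 := by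
      have := congrArg σ hQF
      simpa [map_add, map_mul, map_pow, map_intCast] using this
    have hQKσ : (qa ω:K)*((σ ω : F):K)^2 + (qb ω:K)*((σ ω : F):K) + (qc ω:K) = 0 := by
      have : (((qa ω:F)*(σ ω)^2 + (qb ω:F)*(σ ω) + (qc ω:F) : F) : K) = ((0:F):K) := by
        exact_mod_cast hQFσ
      push_cast at this
      exact this
    have hneF : ω ≠ σ ω := by
      intro heq
      rw [← heq] at hsign
      nlinarith [sq_nonneg (ι ω)]
    have hneK : (ω:K) ≠ ((σ ω : F):K) := fun hcontra => hneF (Subtype.coe_injective hcontra)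
    have hωir : (ω:K) ∉ Set.range ((↑) : ℚ → K) := by
      rintro ⟨q, hq⟩
      apply hneF
      have hωq : ω = (q : F) := by exact_mod_cast hq.symm
      rw [hωq]
      simpa using (map_ratCast (σ : F →+* F) q).symm
    have hprodF : (qa ω:F)*(ω*(σ ω)) = (qc ω:F) := (vieta hQF hQFσ hneF).2
    have hac : qa ω * qc ω < 0 := by
      have hιeq : (qa ω:ℝ)*(ι ω * ι (σ ω)) = (qc ω:ℝ) := by
        have := congrArg ι hprodF
        simpa [map_mul, map_intCast] using this
      have haR : (qa ω:ℝ) ≠ 0 := by exact_mod_cast haω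
      have hsqpos : (0:ℝ) < (qa ω:ℝ)^2 := by positivity
      have : (qa ω:ℝ) * (qc ω:ℝ) < 0 := by
        have heq2 : (qa ω:ℝ)*(qc ω:ℝ) = (qa ω:ℝ)^2 * (ι ω * ι (σ ω)) := by
          rw [← hιeq]; ring
        rw [heq2]
        exact mul_neg_of_pos_of_neg hsqpos hsign
      exact_mod_cast this
    exact ⟨hQKσ, hneK, hωir, hac⟩
  -- Part 1
  have part1 : ∀ (h : ℕ), ∀ ε > (0 : ℝ),
      {ω ∈ SigmaSet | ¬ (∀ z ∈ affinoid p K h,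
        ((qa ω : K) * z ^ 2 + (qb ω : K) * z + (qc ω : K) ≠ 0) ∧
        ‖(sq ω) ^ k *
            ((qa ω : K) * z ^ 2 + (qb ω : K) * z + (qc ω : K)) ^ (-(k : ℤ))‖ < ε)}.Finite := by
    intro h ε hε
    set P : ℝ := (p:ℝ)^h with hPdef
    have hp1 : (1:ℝ) ≤ P := one_le_pow₀ (by exact_mod_cast hp.one_lt.le)
    have hp0 : (0:ℝ) < P := lt_of_lt_of_le zero_lt_one hp1
    have h2pos : (0:ℝ) < ‖(2:ℚ_[p])‖ := norm_pos_iff.2 two_ne_zero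
    set dl : ℝ := min (‖(2:ℚ_[p])‖ * P⁻¹^3) (min ε 1 * P⁻¹^4) with hdl
    have hdl0 : 0 < dl := by
      apply lt_min
      · positivity
      · have : (0:ℝ) < min ε 1 := lt_min hε zero_lt_one
        positivity
    -- Step A : small ‖sq ω‖ means good
    have good : ∀ ω ∈ SigmaSet, ‖sq ω‖ < dl → (∀ z ∈ affinoid p K h,
        ((qa ω : K) * z ^ 2 + (qb ω : K) * z + (qc ω : K) ≠ 0) ∧
        ‖(sq ω) ^ k *
            ((qa ω : K) * z ^ 2 + (qb ω : K) * z + (qc ω : K)) ^ (-(k : ℤ))‖ < ε) := by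
      intro ω hω hlt
      obtain ⟨haω, hprimω, hQω, hDω, hιω, hsqω⟩ := hform ω hω
      obtain ⟨hQKσ, hneK, hωir, hac⟩ := hdata ω hω
      have kb := key_bounds hK (h := h) haω hprimω hQω hQKσ hneK hsqω
      have kb' := key_bounds hK (h := h) haω hprimω hQKσ hQω hneK.symm hsqω
      have hwa : (ω:K) ∉ affinoid p K h := by
        intro hin
        have := kb.2 hin
        have h2 : dl ≤ ‖(2:ℚ_[p])‖ * P⁻¹^3 := min_le_left _ _
        linarith
      have hwba : ((σ ω : F):K) ∉ affinoid p K h := by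
        intro hin
        have := kb'.2 hin
        have h2 : dl ≤ ‖(2:ℚ_[p])‖ * P⁻¹^3 := min_le_left _ _
        linarith
      intro z hz
      have hlow := kb.1 hwa hwba z hz
      have hPinv4 : (0:ℝ) < P⁻¹^4 := by positivity
      have hQz0 : (qa ω : K) * z ^ 2 + (qb ω : K) * z + (qc ω : K) ≠ 0 := by
        intro h0
        rw [h0, norm_zero] at hlow
        linarith
      refine ⟨hQz0, ?_⟩
      set Qz : K := (qa ω : K) * z ^ 2 + (qb ω : K) * z + (qc ω : K) with hQz
      have hQzn : (0:ℝ) < ‖Qz‖ := norm_pos_iff.2 hQz0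
      have hnorm : ‖(sq ω) ^ k * Qz ^ (-(k : ℤ))‖ = (‖sq ω‖ / ‖Qz‖)^k := by
        rw [norm_mul, norm_zpow, norm_pow, zpow_neg, zpow_natCast, div_pow]
        rw [div_eq_mul_inv]
      rw [hnorm]
      have hx0 : (0:ℝ) ≤ ‖sq ω‖ / ‖Qz‖ := by positivity
      have h1 : ‖sq ω‖ / ‖Qz‖ ≤ ‖sq ω‖ * P^4 := by
        rw [div_le_iff₀ hQzn]
        calc ‖sq ω‖ = ‖sq ω‖ * (P^4 * P⁻¹^4) := by
              rw [← mul_pow, mul_inv_cancel₀ (ne_of_gt hp0)]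
              norm_num
          _ = ‖sq ω‖ * P^4 * P⁻¹^4 := by ring
          _ ≤ ‖sq ω‖ * P^4 * ‖Qz‖ := by
              apply mul_le_mul_of_nonneg_left hlow (by positivity)
      have h2 : ‖sq ω‖ * P^4 < min ε 1 := by
        have hd2 : dl ≤ min ε 1 * P⁻¹^4 := min_le_right _ _
        have h3 : ‖sq ω‖ < min ε 1 * P⁻¹^4 := lt_of_lt_of_le hlt hd2
        calc ‖sq ω‖ * P^4 < (min ε 1 * P⁻¹^4) * P^4 := by
              apply mul_lt_mul_of_pos_right h3 (by positivity)
          _ = min ε 1 * (P⁻¹^4 * P^4) := by ring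
          _ = min ε 1 := by
              rw [← mul_pow, inv_mul_cancel₀ (ne_of_gt hp0)]
              norm_num
      have hxlt : ‖sq ω‖ / ‖Qz‖ < min ε 1 := lt_of_le_of_lt h1 h2
      have hxle1 : ‖sq ω‖ / ‖Qz‖ ≤ 1 := le_of_lt (lt_of_lt_of_le hxlt (min_le_right _ _))
      calc (‖sq ω‖ / ‖Qz‖)^k ≤ ‖sq ω‖ / ‖Qz‖ := pow_le_of_le_one hx0 hxle1 (by omega)
        _ < min ε 1 := hxlt
        _ ≤ ε := min_le_left _ _
    -- Step C : the set of ω with dl ≤ ‖sq ω‖ is finite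
    have hfin : {ω | ω ∈ SigmaSet ∧ dl ≤ ‖sq ω‖}.Finite := by
      set nD₀ : ℝ := ‖((D₀:ℤ):ℚ_[p])‖ with hnD₀
      set N : ℤ := max 1 ⌈(D₀:ℝ) * (nD₀ / dl^2)⌉ with hN
      have hbound : ∀ ω ∈ {ω | ω ∈ SigmaSet ∧ dl ≤ ‖sq ω‖},
          |qa ω| ≤ N ∧ |qb ω| ≤ N ∧ |qc ω| ≤ N := by
        rintro ω ⟨hω, hsqge⟩
        obtain ⟨haω, hprimω, hQω, hDω, hιω, hsqω⟩ := hform ω hω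
        obtain ⟨hQKσ, hneK, hωir, hac⟩ := hdata ω hω
        obtain ⟨⟨A, B, C, Dr, hA, hB, hC, hD, hdet, hmobK⟩, hsign⟩ := hSigma ▸ hω
        set Dω : ℤ := (qb ω)^2 - 4*(qa ω)*(qc ω) with hDωdef
        obtain ⟨j, hj⟩ := disc_rigid hp hA hB hC hD hdet hτQ hωir ha₀ hprim₀ hQ₀
          haω hprimω hQω hmobK
        -- p-adic size of the discriminant
        have hsqn : ‖sq ω‖^2 = ‖((Dω:ℤ):ℚ_[p])‖ := by
          rw [← norm_pow, hsqω, normK_int hK]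
        have hcast : ((Dω:ℤ):ℚ_[p]) = ((D₀:ℤ):ℚ_[p]) * (p:ℚ_[p])^(j:ℤ) := by
          have := congrArg ((↑) : ℚ → ℚ_[p]) (show ((Dω:ℤ):ℚ) = ((D₀:ℤ):ℚ) * (p:ℚ)^j from hj)
          rw [Rat.cast_mul, Rat.cast_intCast, Rat.cast_intCast, Rat.cast_zpow, Rat.cast_natCast] at this
          exact_mod_cast this
        have hδ2 : dl^2 ≤ nD₀ * (p:ℝ)^(-j) := by
          have h1 : dl^2 ≤ ‖sq ω‖^2 := pow_le_pow_left₀ hdl0.le hsqge 2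
          rw [hsqn, hcast, norm_mul, Padic.norm_p_zpow] at h1
          exact h1
        have hppos : (0:ℝ) < (p:ℝ) := by exact_mod_cast hp.pos
        have hzj : (0:ℝ) < (p:ℝ)^(j:ℤ) := zpow_pos hppos j
        have hjb : (p:ℝ)^(j:ℤ) ≤ nD₀ / dl^2 := by
          rw [zpow_neg] at hδ2
          rw [le_div_iff₀ (by positivity)]
          calc (p:ℝ)^(j:ℤ) * dl^2 ≤ (p:ℝ)^(j:ℤ) * (nD₀ * ((p:ℝ)^(j:ℤ))⁻¹) := by
                apply mul_le_mul_of_nonneg_left hδ2 hzj.le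
            _ = nD₀ := by field_simp
        have hDR : (Dω:ℝ) = (D₀:ℝ) * (p:ℝ)^(j:ℤ) := by
          have := congrArg ((↑) : ℚ → ℝ) (show ((Dω:ℤ):ℚ) = ((D₀:ℤ):ℚ) * (p:ℚ)^j from hj)
          rw [Rat.cast_mul, Rat.cast_intCast, Rat.cast_intCast, Rat.cast_zpow, Rat.cast_natCast] at this
          exact_mod_cast this
        have hDωpos : (0:ℝ) < (Dω:ℝ) := by exact_mod_cast hDω
        have hD₀pos : (0:ℝ) < (D₀:ℝ) := by nlinarith
        have hDle : (Dω:ℝ) ≤ (N:ℝ) := by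
          calc (Dω:ℝ) = (D₀:ℝ) * (p:ℝ)^(j:ℤ) := hDR
            _ ≤ (D₀:ℝ) * (nD₀ / dl^2) := mul_le_mul_of_nonneg_left hjb hD₀pos.le
            _ ≤ (⌈(D₀:ℝ) * (nD₀ / dl^2)⌉ : ℤ) := Int.le_ceil _
            _ ≤ (N:ℝ) := by exact_mod_cast le_max_right _ _
        have hDleZ : Dω ≤ N := by exact_mod_cast hDle
        have hN1 : 1 ≤ N := le_max_left _ _
        have hb2 : (qb ω)^2 ≤ Dω := by nlinarith
        have hqc0 : qc ω ≠ 0 := by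
          intro h0
          rw [h0, mul_zero] at hac
          exact absurd hac (lt_irrefl 0)
        have hqc1 : 1 ≤ |qc ω| := Int.one_le_abs hqc0
        have hqa1 : 1 ≤ |qa ω| := Int.one_le_abs haω
        have habs : |qa ω| * |qc ω| = -(qa ω * qc ω) := by
          rw [← abs_mul]
          exact abs_of_neg hac
        refine ⟨?_, ?_, ?_⟩
        · nlinarith [sq_nonneg (qb ω)]
        · nlinarith [abs_nonneg (qb ω), sq_abs (qb ω)]
        · nlinarith [sq_nonneg (qb ω)]
      -- conclude finiteness via the coefficient map
      have himage : (fun ω => (qa ω, qb ω, qc ω)) '' {ω | ω ∈ SigmaSet ∧ dl ≤ ‖sq ω‖} ⊆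
          (Set.Icc (-N) N) ×ˢ ((Set.Icc (-N) N) ×ˢ (Set.Icc (-N) N)) := by
        rintro ⟨x, y, z⟩ ⟨ω, hω, heq⟩
        obtain ⟨h1, h2, h3⟩ := hbound ω hω
        obtain ⟨rfl, rfl, rfl⟩ : qa ω = x ∧ qb ω = y ∧ qc ω = z := by
          simpa [Prod.ext_iff] using heq
        exact ⟨abs_le.1 h1, abs_le.1 h2, abs_le.1 h3⟩
      have hinj : Set.InjOn (fun ω => (qa ω, qb ω, qc ω))
          {ω | ω ∈ SigmaSet ∧ dl ≤ ‖sq ω‖} := by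
        rintro ω₁ ⟨hω₁, _⟩ ω₂ ⟨hω₂, _⟩ heq
        obtain ⟨e1, e2, e3⟩ : qa ω₁ = qa ω₂ ∧ qb ω₁ = qb ω₂ ∧ qc ω₁ = qc ω₂ := by
          simpa [Prod.ext_iff] using heq
        have hι1 := (hform ω₁ hω₁).2.2.2.2.1
        have hι2 := (hform ω₂ hω₂).2.2.2.2.1
        apply ι.injective
        rw [hι1, hι2, e1, e2, e3]
      exact Set.Finite.of_finite_image
        (Set.Finite.subset ((Set.finite_Icc _ _).prod ((Set.finite_Icc _ _).prod
          (Set.finite_Icc _ _))) himage) hinj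
    -- Step B : bad set is contained in the finite set
    apply hfin.subset
    rintro ω ⟨hω, hbad⟩
    refine ⟨hω, ?_⟩
    by_contra hlt
    push_neg at hlt
    exact hbad (good ω hω hlt)
  refine ⟨part1, ?_⟩
  -- Part 2
  intro h
  haveI := ultraK hK
  set I := {ω : F // ω ∈ SigmaSet ∧ ∀ z ∈ affinoid p K h,
      (qa ω : K) * z ^ 2 + (qb ω : K) * z + (qc ω : K) ≠ 0} with hI
  set f : I → K → K := fun ω z => (if 0 ≤ ι ω.1 then (1 : K) else -1) * (sq ω.1) ^ k *
      ((qa ω.1 : K) * z ^ 2 + (qb ω.1 : K) * z + (qc ω.1 : K)) ^ (-(k : ℤ)) with hf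
  have hfnorm : ∀ (ω : I) (z : K), ‖f ω z‖ =
      ‖(sq ω.1) ^ k * ((qa ω.1 : K) * z ^ 2 + (qb ω.1 : K) * z + (qc ω.1 : K)) ^ (-(k : ℤ))‖ := by
    intro ω z
    rw [hf]
    simp only [mul_assoc]
    rw [norm_mul]
    split <;> simp
  -- finite exceptional sets
  have hT : ∀ ε : ℝ, 0 < ε → ∃ s : Finset I, ∀ (ω : I), ω ∉ s → ∀ z ∈ affinoid p K h,
      ‖f ω z‖ < ε := by
    intro ε hε
    have hfin := part1 h ε hε
    have hpre : (Subtype.val ⁻¹' {ω ∈ SigmaSet | ¬ (∀ z ∈ affinoid p K h,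
        ((qa ω : K) * z ^ 2 + (qb ω : K) * z + (qc ω : K) ≠ 0) ∧
        ‖(sq ω) ^ k *
            ((qa ω : K) * z ^ 2 + (qb ω : K) * z + (qc ω : K)) ^ (-(k : ℤ))‖ < ε)} :
        Set I).Finite :=
      hfin.preimage (Set.injOn_of_injective Subtype.val_injective)
    refine ⟨hpre.toFinset, ?_⟩
    intro ω hωs z hz
    rw [hfnorm]
    by_cases hmem : ω.1 ∈ {ω ∈ SigmaSet | ¬ (∀ z ∈ affinoid p K h,
        ((qa ω : K) * z ^ 2 + (qb ω : K) * z + (qc ω : K) ≠ 0) ∧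
        ‖(sq ω) ^ k *
            ((qa ω : K) * z ^ 2 + (qb ω : K) * z + (qc ω : K)) ^ (-(k : ℤ))‖ < ε)}
    · exact absurd (hpre.mem_toFinset.2 hmem) hωs
    · have hSig : ω.1 ∈ SigmaSet := ω.2.1
      simp only [Set.mem_setOf_eq, not_and, not_not] at hmem
      exact ((hmem hSig) z hz).2
  -- summability
  have hsummable : ∀ z, z ∈ affinoid p K h → Summable (fun ω : I => f ω z) := by
    intro z hz
    rw [summable_iff_vanishing_norm]
    intro ε hε
    obtain ⟨s, hs⟩ := hT ε hε
    refine ⟨s, ?_⟩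
    intro t hdisj
    apply norm_sum_lt_of_lt hK _ _ hε
    intro ω hωt
    have : ω ∉ s := fun hωs => (Finset.disjoint_left.1 hdisj hωt) hωs
    exact hs ω this z hz
  refine ⟨fun z => ∑' ω : I, f ω z, ?_⟩
  rw [Metric.tendstoUniformlyOn_iff]
  intro ε hε
  obtain ⟨s, hs⟩ := hT (ε/2) (by linarith)
  filter_upwards [Filter.eventually_ge_atTop s] with T hT' z hz
  have hhs : HasSum (fun ω : I => f ω z) (∑' ω : I, f ω z) := (hsummable z hz).hasSum
  have hev : ∀ᶠ T' in (atTop : Filter (Finset I)),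
      dist (∑ ω ∈ T', f ω z) (∑ ω ∈ T, f ω z) ≤ ε/2 := by
    filter_upwards [Filter.eventually_ge_atTop T] with T' hT''
    rw [dist_eq_norm, ← Finset.sum_sdiff hT'']
    simp only [add_sub_cancel_right]
    rcases (T' \ T).eq_empty_or_nonempty with hemp | hne
    · rw [hemp]
      simp
      linarith
    · apply le_of_lt
      apply norm_sum_lt_of_lt hK _ _ (by linarith : (0:ℝ) < ε/2)
      intro ω hωt
      have hω1 : ω ∈ T' \ T := hωt
      have : ω ∉ s := by
        intro hωs
        exact (Finset.mem_sdiff.1 hω1).2 (hT' hωs)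
      exact hs ω this z hz
  have htend : Filter.Tendsto (fun T' : Finset I => dist (∑ ω ∈ T', f ω z) (∑ ω ∈ T, f ω z))
      atTop (nhds (dist (∑' ω : I, f ω z) (∑ ω ∈ T, f ω z))) :=
    Filter.Tendsto.dist hhs tendsto_const_nhds
  have := le_of_tendsto htend hev
  linarith [this]
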